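/- Let C be a category with terminal object such that C^∞ = C^{N^op} is S-enriched. Every locally contractive S-enriched endofunctor F : C^∞ → C^∞ has a fixed point: there exists an object Ω of C^∞ and an isomorphism FΩ ≅ Ω. Moreover Ω may be taken to be the diagonal Ω(n) = F^{n+1}(T)(n), where T is the terminal object of C^∞. -/

import Mathlib

open CategoryTheory CategoryTheory.Limits

universe v u

/-- An object of `C^∞ = C^{ℕᵒᵖ}`: a cochain `X(0) ← X(1) ← X(2) ← ⋯` in `C`. -/
structure GObj (C : Type u) [Category.{v} C] where
  obj : ℕ → C
  res : ∀ n, obj (n + 1) ⟶ obj n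

namespace GObj

variable {C : Type u} [Category.{v} C]

/-- A morphism in `C^∞`: a natural transformation between cochains. -/
@[ext]
structure GHom (X Y : GObj C) where
  app : ∀ n, X.obj n ⟶ Y.obj n
  nat : ∀ n, X.res n ≫ app n = app (n + 1) ≫ Y.res n

instance : Category (GObj C) where
  Hom := GHom
  id X := { app := fun _ => 𝟙 _, nat := by intro n; simp }
  comp {X Y Z} f g :=
    { app := fun n => f.app n ≫ g.app n
      nat := by
        intro n
        rw [← Category.assoc, f.nat, Category.assoc, g.nat, ← Category.assoc] }
  id_comp f := by apply GHom.ext; funext n; simp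
  comp_id f := by apply GHom.ext; funext n; simp
  assoc f g h := by apply GHom.ext; funext n; simp

@[simp] theorem id_app (X : GObj C) (n : ℕ) : (𝟙 X : X ⟶ X).app n = 𝟙 (X.obj n) := rfl

@[simp] theorem comp_app {X Y Z : GObj C} (f : X ⟶ Y) (g : Y ⟶ Z) (n : ℕ) :
    (f ≫ g).app n = f.app n ≫ g.app n := rfl

/-- The constant cochain on an object of `C`. -/
def constG (T : C) : GObj C where
  obj _ := T
  res _ := 𝟙 T

end GObj

namespace GObj

variable {C : Type u} [Category.{v} C]

/-- A truncated natural transformation `(f_0, …, f_n)` from `X` to `Y`. -/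
@[ext]
structure TruncHom (X Y : GObj C) (n : ℕ) where
  app : ∀ k, k ≤ n → (X.obj k ⟶ Y.obj k)
  nat : ∀ k (h : k + 1 ≤ n),
    X.res k ≫ app k (Nat.le_of_succ_le h) = app (k + 1) h ≫ Y.res k

/-- Restriction of truncated natural transformations: forget the last component. -/
def tres {X Y : GObj C} {n : ℕ} (f : TruncHom X Y (n + 1)) : TruncHom X Y n where
  app k h := f.app k (h.trans (Nat.le_succ n))
  nat k h := f.nat k (h.trans (Nat.le_succ n))

/-- The truncated identity natural transformation. -/
def tid (X : GObj C) (n : ℕ) : TruncHom X X n where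
  app k _ := 𝟙 (X.obj k)
  nat k _ := by simp

/-- Componentwise composition of truncated natural transformations. -/
def tcomp {X Y Z : GObj C} {n : ℕ} (g : TruncHom Y Z n) (f : TruncHom X Y n) :
    TruncHom X Z n where
  app k h := f.app k h ≫ g.app k h
  nat k h := by
    rw [← Category.assoc, f.nat k h, Category.assoc, g.nat k h, ← Category.assoc]

/-- The truncation of a (global) morphism of `C^∞`. -/
def trunc {X Y : GObj C} (f : X ⟶ Y) (n : ℕ) : TruncHom X Y n where
  app k _ := f.app k
  nat k _ := f.nat k

/-- The hom-object of the `S`-enrichment of `C^∞`: an object of the topos of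
trees `S = Set^{ℕᵒᵖ}` whose `n`-th component is the set of truncated natural
transformations of length `n`, with restriction forgetting the last component. -/
def homObj (X Y : GObj C) : GObj (Type v) where
  obj n := TruncHom X Y n
  res _ := TypeCat.ofHom tres

end GObj

namespace GObj

/-- Object part of the later functor on the topos of trees. -/
def LaterTObj (A : GObj (Type u)) : ℕ → Type u
  | 0 => PUnit
  | n + 1 => A.obj n

/-- The later functor `L : S → S` on (objects of) the topos of trees. -/
def LaterT (A : GObj (Type u)) : GObj (Type u) where
  obj := LaterTObj A
  res n :=
    match n with
    | 0 => TypeCat.ofHom fun _ => PUnit.unit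
    | n + 1 => A.res n

/-- The `next` natural transformation `ν_A : A → L A` in the topos of trees. -/
def nextT (A : GObj (Type u)) : A ⟶ LaterT A where
  app n :=
    match n with
    | 0 => TypeCat.ofHom fun _ => PUnit.unit
    | n + 1 => A.res n
  nat n := by
    cases n with
    | zero => rfl
    | succ n => rfl

/-- Pointwise cartesian product in the topos of trees. -/
def GProd (A B : GObj (Type u)) : GObj (Type u) where
  obj n := A.obj n × B.obj n
  res n := TypeCat.ofHom fun p => (A.res n p.1, B.res n p.2)

/-- Pairing for the pointwise cartesian product. -/
def gpair {Z A B : GObj (Type u)} (f : Z ⟶ A) (g : Z ⟶ B) : Z ⟶ GProd A B where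
  app n := TypeCat.ofHom fun z => (f.app n z, g.app n z)
  nat n := by
    ext z
    refine Prod.ext ?_ ?_
    · exact types_congr_hom (f.nat n) z
    · exact types_congr_hom (g.nat n) z

/-- Evaluation `[A → B] × A → B` for the exponential `[A → B] = homObj A B`
in the topos of trees. -/
def gev (A B : GObj (Type u)) : GProd (homObj A B) A ⟶ B where
  app n := TypeCat.ofHom fun p => p.1.app n (le_refl n) p.2
  nat n := by
    ext p
    exact ConcreteCategory.congr_hom (p.1.nat n (le_refl (n + 1))) p.2

end GObj

namespace GObj

variable {C : Type u} [Category.{v} C]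

/-- An `S`-enriched endofunctor of `C^∞`: a functor together with its action on
the hom-objects of the enrichment in the topos of trees (a morphism in `S`,
compatible with enriched identities and composition, and with the underlying
functor). -/
structure EnrFunctor (C : Type u) [Category.{v} C] where
  F : GObj C ⥤ GObj C
  Φ : ∀ (X Y : GObj C) (n : ℕ), TruncHom X Y n → TruncHom (F.obj X) (F.obj Y) n
  Φ_res : ∀ (X Y : GObj C) (n : ℕ) (f : TruncHom X Y (n + 1)),
    tres (Φ X Y (n + 1) f) = Φ X Y n (tres f)
  Φ_id : ∀ (X : GObj C) (n : ℕ), Φ X X n (tid X n) = tid (F.obj X) n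
  Φ_comp : ∀ (X Y Z : GObj C) (n : ℕ) (g : TruncHom Y Z n) (f : TruncHom X Y n),
    Φ X Z n (tcomp g f) = tcomp (Φ Y Z n g) (Φ X Y n f)
  Φ_map : ∀ (X Y : GObj C) (f : X ⟶ Y) (n : ℕ), Φ X Y n (trunc f n) = trunc (F.map f) n

/-- A locally contractive `S`-enriched endofunctor: the action on hom-objects
factorises through the `next` natural transformation `ν : id ⇒ L` of `S`
via a family `G` which is itself a morphism in `S` and behaves like a functor
(compatibly with enriched identities and composition). -/
def EnrFunctor.LocallyContractive (E : EnrFunctor C) : Prop :=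
  ∃ G : ∀ (X Y : GObj C) (n : ℕ),
      (LaterT (homObj X Y)).obj n → TruncHom (E.F.obj X) (E.F.obj Y) n,
    (∀ (X Y : GObj C) (f : TruncHom X Y 0), E.Φ X Y 0 f = G X Y 0 PUnit.unit) ∧
    (∀ (X Y : GObj C) (n : ℕ) (f : TruncHom X Y (n + 1)),
      E.Φ X Y (n + 1) f = G X Y (n + 1) (tres f)) ∧
    (∀ (X Y : GObj C) (n : ℕ) (x : (LaterT (homObj X Y)).obj (n + 1)),
      tres (G X Y (n + 1) x) = G X Y n ((LaterT (homObj X Y)).res n x)) ∧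
    (∀ X : GObj C, G X X 0 PUnit.unit = tid (E.F.obj X) 0) ∧
    (∀ (X : GObj C) (n : ℕ), G X X (n + 1) (tid X n) = tid (E.F.obj X) (n + 1)) ∧
    (∀ (X Y Z : GObj C) (u : PUnit),
      G X Z 0 u = tcomp (G Y Z 0 u) (G X Y 0 u)) ∧
    (∀ (X Y Z : GObj C) (n : ℕ) (g : TruncHom Y Z n) (f : TruncHom X Y n),
      G X Z (n + 1) (tcomp g f) = tcomp (G Y Z (n + 1) g) (G X Y (n + 1) f))

/-- `α : X ⟶ Y` is an `n`-isomorphism if its first `n` components are isomorphisms. -/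
def IsNIso {X Y : GObj C} (α : X ⟶ Y) (n : ℕ) : Prop :=
  ∀ k, k < n → IsIso (α.app k)

/-- Composition of `S`-enriched endofunctors. -/
def EnrFunctor.comp (F G : EnrFunctor C) : EnrFunctor C where
  F := G.F ⋙ F.F
  Φ X Y n f := F.Φ _ _ n (G.Φ X Y n f)
  Φ_res := by intro X Y n f; rw [F.Φ_res, G.Φ_res]
  Φ_id := by intro X n; rw [G.Φ_id, F.Φ_id]; rfl
  Φ_comp := by intro X Y Z n g f; rw [G.Φ_comp, F.Φ_comp]
  Φ_map := by intro X Y f n; rw [G.Φ_map, F.Φ_map]; rfl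

end GObj

section FixPointAux

open GObj

variable {C : Type u} [Category.{v} C]

/-- Locally contractive functors send `n`-isomorphisms to `(n+1)`-isomorphisms. -/
theorem GObj.nIso_map {E : EnrFunctor C} (hE : E.LocallyContractive) {X Y : GObj C}
    (α : X ⟶ Y) (n : ℕ) (h : IsNIso α n) : IsNIso (E.F.map α) (n + 1) := by
  obtain ⟨G, hG0, hGs, -, hid0, hids, hcomp0, hcomps⟩ := hE
  intro k hk
  have hk' : k ≤ n := Nat.lt_succ_iff.mp hk
  have e1 : trunc (E.F.map α) n = E.Φ X Y n (trunc α n) := (E.Φ_map X Y α n).symm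
  cases n with
  | zero =>
    obtain rfl : k = 0 := Nat.le_zero.mp hk'
    have e2 : trunc (E.F.map α) 0 = G X Y 0 PUnit.unit := e1.trans (hG0 X Y _)
    have c1 : tcomp (G Y X 0 PUnit.unit) (G X Y 0 PUnit.unit) = tid (E.F.obj X) 0 := by
      rw [← hcomp0 X Y X PUnit.unit, hid0]
    have c2 : tcomp (G X Y 0 PUnit.unit) (G Y X 0 PUnit.unit) = tid (E.F.obj Y) 0 := by
      rw [← hcomp0 Y X Y PUnit.unit, hid0]
    refine ⟨(G Y X 0 PUnit.unit).app 0 le_rfl, ?_, ?_⟩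
    · have h1 := congrArg (fun t => TruncHom.app t 0 le_rfl) e2
      rw [show (E.F.map α).app 0 = (G X Y 0 PUnit.unit).app 0 le_rfl from h1]
      exact congrArg (fun t => TruncHom.app t 0 le_rfl) c1
    · have h1 := congrArg (fun t => TruncHom.app t 0 le_rfl) e2
      rw [show (E.F.map α).app 0 = (G X Y 0 PUnit.unit).app 0 le_rfl from h1]
      exact congrArg (fun t => TruncHom.app t 0 le_rfl) c2
  | succ m =>
    have hiso : ∀ k, k ≤ m → IsIso (α.app k) := fun k hkm => h k (by omega)
    let β : TruncHom Y X m :=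
      { app := fun k hkm => @inv _ _ _ _ (α.app k) (hiso k hkm)
        nat := fun k hk2 => by
          haveI := hiso k (Nat.le_of_succ_le hk2)
          haveI := hiso (k + 1) hk2
          rw [IsIso.eq_inv_comp, ← Category.assoc, ← α.nat k, Category.assoc,
            IsIso.hom_inv_id, Category.comp_id] }
    have e2 : trunc (E.F.map α) (m + 1) = G X Y (m + 1) (trunc α m) := by
      rw [e1, hGs X Y m (trunc α (m + 1))]
      rfl
    have hβα : tcomp β (trunc α m) = tid X m := by
      apply TruncHom.ext
      funext k hkm
      haveI := hiso k hkm
      exact IsIso.hom_inv_id (α.app k)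
    have hαβ : tcomp (trunc α m) β = tid Y m := by
      apply TruncHom.ext
      funext k hkm
      haveI := hiso k hkm
      exact IsIso.inv_hom_id (α.app k)
    have c1 : tcomp (G Y X (m + 1) β) (G X Y (m + 1) (trunc α m)) = tid (E.F.obj X) (m + 1) := by
      rw [← hcomps X Y X m β (trunc α m), hβα, hids]
    have c2 : tcomp (G X Y (m + 1) (trunc α m)) (G Y X (m + 1) β) = tid (E.F.obj Y) (m + 1) := by
      rw [← hcomps Y X Y m (trunc α m) β, hαβ, hids]
    refine ⟨(G Y X (m + 1) β).app k hk', ?_, ?_⟩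
    · have h1 := congrArg (fun t => TruncHom.app t k hk') e2
      rw [show (E.F.map α).app k = (G X Y (m + 1) (trunc α m)).app k hk' from h1]
      exact congrArg (fun t => TruncHom.app t k hk') c1
    · have h1 := congrArg (fun t => TruncHom.app t k hk') e2
      rw [show (E.F.map α).app k = (G X Y (m + 1) (trunc α m)).app k hk' from h1]
      exact congrArg (fun t => TruncHom.app t k hk') c2

/-- A morphism with componentwise invertible components is an isomorphism in `C^∞`. -/
theorem GObj.isIso_of_comps {X Y : GObj C} (f : X ⟶ Y) (h : ∀ n, IsIso (f.app n)) :
    IsIso f := by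
  haveI := h
  refine ⟨⟨⟨fun n => inv (f.app n), fun n => ?_⟩, ?_, ?_⟩⟩
  · rw [IsIso.eq_inv_comp, ← Category.assoc, ← f.nat n, Category.assoc,
      IsIso.hom_inv_id, Category.comp_id]
  · apply GHom.ext; funext n
    exact IsIso.hom_inv_id (f.app n)
  · apply GHom.ext; funext n
    exact IsIso.inv_hom_id (f.app n)

/-- The terminal sequence `T, F T, F² T, …`. -/
def Xseq (T : C) (E : EnrFunctor C) : ℕ → GObj C
  | 0 => constG T
  | m + 1 => E.F.obj (Xseq T E m)

variable {T : C}

/-- The connecting maps of the terminal sequence. -/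
def pseq (hT : IsTerminal T) (E : EnrFunctor C) : ∀ m, Xseq T E (m + 1) ⟶ Xseq T E m
  | 0 => { app := fun _ => hT.from _, nat := fun _ => hT.hom_ext _ _ }
  | m + 1 => E.F.map (pseq hT E m)

theorem pseq_nIso (hT : IsTerminal T) {E : EnrFunctor C} (hE : E.LocallyContractive) :
    ∀ m, IsNIso (pseq hT E m) m
  | 0 => fun k hk => absurd hk (Nat.not_lt_zero k)
  | m + 1 => GObj.nIso_map hE (pseq hT E m) m (pseq_nIso hT hE m)

/-- The diagonal of the terminal sequence, `Ω(n) = F^{n+1}(T)(n)`. -/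
def Om (hT : IsTerminal T) (E : EnrFunctor C) : GObj C where
  obj n := (Xseq T E (n + 1)).obj n
  res n := (pseq hT E (n + 1)).app (n + 1) ≫ (Xseq T E (n + 1)).res n

section Comps

variable (hT : IsTerminal T) (E : EnrFunctor C) (hE : E.LocallyContractive)

/-- Forward (downward) composites in the terminal sequence, at a fixed level `n`. -/
def dcomp (n a : ℕ) : ∀ {b : ℕ}, a ≤ b → ((Xseq T E b).obj n ⟶ (Xseq T E a).obj n) :=
  fun {b} h =>
    Nat.leRec (motive := fun b _ => ((Xseq T E b).obj n ⟶ (Xseq T E a).obj n))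
      (𝟙 _) (fun b _ ih => (pseq hT E b).app n ≫ ih) h

theorem dcomp_self (n a : ℕ) (h : a ≤ a) : dcomp hT E n a h = 𝟙 _ :=
  Nat.leRec_self _ _

theorem dcomp_succ (n a b : ℕ) (h : a ≤ b) {h2 : a ≤ b + 1} :
    dcomp hT E n a h2 = (pseq hT E b).app n ≫ dcomp hT E n a h :=
  Nat.leRec_succ _ _ h

theorem dcomp_bot (n m : ℕ) : ∀ {b : ℕ} (h : m + 1 ≤ b) (h1 : m ≤ b),
    dcomp hT E n m h1 = dcomp hT E n (m + 1) h ≫ (pseq hT E m).app n := by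
  intro b h
  induction b, h using Nat.le_induction with
  | base =>
    intro h1
    rw [dcomp_succ hT E n m m le_rfl, dcomp_self, dcomp_self, Category.comp_id,
      Category.id_comp]
  | succ b hb ih =>
    intro h1
    rw [dcomp_succ hT E n m b (Nat.le_of_succ_le hb), ih (Nat.le_of_succ_le hb),
      dcomp_succ hT E n (m + 1) b hb, Category.assoc]

theorem dcomp_nat (n a : ℕ) : ∀ {b : ℕ} (h : a ≤ b),
    (Xseq T E b).res n ≫ dcomp hT E n a h = dcomp hT E (n + 1) a h ≫ (Xseq T E a).res n := by
  intro b h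
  induction b, h using Nat.le_induction with
  | base => rw [dcomp_self, dcomp_self, Category.comp_id, Category.id_comp]
  | succ b hb ih =>
    rw [dcomp_succ hT E n a b hb, dcomp_succ hT E (n + 1) a b hb, ← Category.assoc,
      (pseq hT E b).nat n, Category.assoc, ih, Category.assoc]

/-- Inverse (upward) composites in the terminal sequence, at a fixed level `n`,
starting from the stable index `n+1`. -/
noncomputable def ucomp (n : ℕ) : ∀ {b : ℕ}, n + 1 ≤ b →
    ((Xseq T E (n + 1)).obj n ⟶ (Xseq T E b).obj n) :=
  fun {b} h =>
    Nat.leRec (motive := fun b _ => ((Xseq T E (n + 1)).obj n ⟶ (Xseq T E b).obj n))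
      (𝟙 _)
      (fun b hb ih => ih ≫ @inv _ _ _ _ ((pseq hT E b).app n) (pseq_nIso hT hE b n hb)) h

theorem ucomp_self (n : ℕ) (h : n + 1 ≤ n + 1) : ucomp hT E hE n h = 𝟙 _ :=
  Nat.leRec_self _ _

theorem ucomp_succ (n b : ℕ) (h : n + 1 ≤ b) {h2 : n + 1 ≤ b + 1} :
    ucomp hT E hE n h2 =
      ucomp hT E hE n h ≫ @inv _ _ _ _ ((pseq hT E b).app n) (pseq_nIso hT hE b n h) :=
  Nat.leRec_succ _ _ h

theorem ucomp_isIso (n : ℕ) : ∀ {b : ℕ} (h : n + 1 ≤ b), IsIso (ucomp hT E hE n h) := by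
  intro b h
  induction b, h using Nat.le_induction with
  | base => rw [ucomp_self]; infer_instance
  | succ b hb ih =>
    rw [ucomp_succ hT E hE n b hb]
    haveI := ih
    haveI := pseq_nIso hT hE b n hb
    infer_instance

theorem ucomp_nat (n : ℕ) : ∀ {b : ℕ} (h : n + 2 ≤ b) (h1 : n + 1 ≤ b),
    (Om hT E).res n ≫ ucomp hT E hE n h1 =
      ucomp hT E hE (n + 1) h ≫ (Xseq T E b).res n := by
  intro b h
  induction b, h using Nat.le_induction with
  | base =>
    intro h1
    haveI := pseq_nIso hT hE (n + 1) n (Nat.lt_succ_self n)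
    rw [ucomp_succ hT E hE n (n + 1) le_rfl, ucomp_self, ucomp_self, Category.id_comp,
      Category.id_comp]
    show ((pseq hT E (n + 1)).app (n + 1) ≫ (Xseq T E (n + 1)).res n) ≫
        inv ((pseq hT E (n + 1)).app n) = (Xseq T E (n + 2)).res n
    rw [IsIso.comp_inv_eq]
    exact ((pseq hT E (n + 1)).nat n).symm
  | succ b hb ih =>
    intro h1
    haveI hin : IsIso ((pseq hT E b).app n) := pseq_nIso hT hE b n (by omega)
    haveI hin1 : IsIso ((pseq hT E b).app (n + 1)) := pseq_nIso hT hE b (n + 1) hb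
    have key : (Xseq T E b).res n ≫ inv ((pseq hT E b).app n) =
        inv ((pseq hT E b).app (n + 1)) ≫ (Xseq T E (b + 1)).res n := by
      rw [IsIso.eq_inv_comp, ← Category.assoc, ← (pseq hT E b).nat n, Category.assoc,
        IsIso.hom_inv_id, Category.comp_id]
    rw [ucomp_succ hT E hE n b (by omega), ucomp_succ hT E hE (n + 1) b hb]
    erw [← Category.assoc, ih (by omega), Category.assoc, key, Category.assoc]
    rfl

/-- The components of the projections `Ω ⟶ F^m(T)`. -/
noncomputable def piApp (m n : ℕ) : (Om hT E).obj n ⟶ (Xseq T E m).obj n :=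
  if h : m ≤ n + 1 then dcomp hT E n m h
  else ucomp hT E hE n (le_of_lt (Nat.lt_of_not_le h))

theorem piApp_dcomp (m n : ℕ) (h : m ≤ n + 1) :
    piApp hT E hE m n = dcomp hT E n m h := dif_pos h

theorem piApp_ucomp (m n : ℕ) (h : n + 1 ≤ m) :
    piApp hT E hE m n = ucomp hT E hE n h := by
  by_cases h' : m ≤ n + 1
  · obtain rfl : m = n + 1 := Nat.le_antisymm h' h
    rw [piApp_dcomp hT E hE (n + 1) n h', dcomp_self, ucomp_self]
  · exact dif_neg h'

theorem piApp_isIso (m n : ℕ) (h : n < m) : IsIso (piApp hT E hE m n) := by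
  rw [piApp_ucomp hT E hE m n h]
  exact ucomp_isIso hT E hE n h

theorem piApp_succ (m n : ℕ) :
    piApp hT E hE m n = piApp hT E hE (m + 1) n ≫ (pseq hT E m).app n := by
  by_cases h : m + 1 ≤ n + 1
  · rw [piApp_dcomp hT E hE m n (Nat.le_of_succ_le h), piApp_dcomp hT E hE (m + 1) n h,
      dcomp_bot hT E n m h]
    rfl
  · have h2 : n + 1 ≤ m := by omega
    haveI := pseq_nIso hT hE m n h2
    rw [piApp_ucomp hT E hE m n h2, piApp_ucomp hT E hE (m + 1) n (by omega),
      ucomp_succ hT E hE n m h2]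
    erw [Category.assoc, IsIso.inv_hom_id, Category.comp_id]

theorem piApp_nat (m n : ℕ) :
    (Om hT E).res n ≫ piApp hT E hE m n =
      piApp hT E hE m (n + 1) ≫ (Xseq T E m).res n := by
  by_cases h : m ≤ n + 1
  · rw [piApp_dcomp hT E hE m n h, piApp_dcomp hT E hE m (n + 1) (by omega),
      dcomp_succ hT E (n + 1) m (n + 1) h]
    show ((pseq hT E (n + 1)).app (n + 1) ≫ (Xseq T E (n + 1)).res n) ≫ dcomp hT E n m h = _
    rw [Category.assoc, dcomp_nat hT E n m h, ← Category.assoc, Category.assoc]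
    exact (Category.assoc _ _ _).symm
  · have h2 : n + 2 ≤ m := by omega
    rw [piApp_ucomp hT E hE m n (by omega), piApp_ucomp hT E hE m (n + 1) h2]
    exact ucomp_nat hT E hE n h2 (by omega)

/-- The projections `Ω ⟶ F^m(T)` as morphisms of `C^∞`. -/
noncomputable def piHom (m : ℕ) : Om hT E ⟶ Xseq T E m where
  app n := piApp hT E hE m n
  nat n := piApp_nat hT E hE m n

theorem piHom_succ (m : ℕ) :
    piHom hT E hE m = piHom hT E hE (m + 1) ≫ pseq hT E m := by
  apply GHom.ext
  funext n
  exact piApp_succ hT E hE m n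

theorem piHom_nIso (m : ℕ) : IsNIso (piHom hT E hE m) m := fun k hk =>
  piApp_isIso hT E hE m k hk

end Comps

end FixPointAux

open GObj in
/-- **Fixed points of locally contractive functors.** Every locally contractive
`S`-enriched endofunctor of `C^∞` has a fixed point `Ω` (an object together
with an isomorphism `F Ω ≅ Ω`), and `Ω` may be taken to be the diagonal of the
terminal sequence, with `Ω(n) = F^{n+1}(T)(n)`. -/
theorem locally_contractive_has_fixed_point {C : Type u} [Category.{v} C]
    {T : C} (hT : IsTerminal T)
    (E : EnrFunctor C) (hE : E.LocallyContractive) :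
    ∃ Ω : GObj C, Nonempty (E.F.obj Ω ≅ Ω) ∧
      ∀ n, Ω.obj n = ((E.F.obj)^[n + 1] (constG T)).obj n := by
  refine ⟨Om hT E, ⟨?_⟩, ?_⟩
  · -- the fixed-point isomorphism
    let a : E.F.obj (Om hT E) ⟶ Om hT E :=
      { app := fun n => (E.F.map (piHom hT E hE n)).app n
        nat := fun n => by
          have e1 : (E.F.map (piHom hT E hE n)).app n =
              (E.F.map (piHom hT E hE (n + 1))).app n ≫ (pseq hT E (n + 1)).app n := by
            rw [piHom_succ hT E hE n, E.F.map_comp]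
            rfl
          show (E.F.obj (Om hT E)).res n ≫ (E.F.map (piHom hT E hE n)).app n =
              (E.F.map (piHom hT E hE (n + 1))).app (n + 1) ≫
                ((pseq hT E (n + 1)).app (n + 1) ≫ (Xseq T E (n + 1)).res n)
          rw [e1]
          erw [← Category.assoc, (E.F.map (piHom hT E hE (n + 1))).nat n,
            Category.assoc]
          exact congrArg (fun t => (E.F.map (piHom hT E hE (n + 1))).app (n + 1) ≫ t)
            ((pseq hT E (n + 1)).nat n) }
    haveI : IsIso a := by
      apply GObj.isIso_of_comps
      intro n
      exact GObj.nIso_map hE (piHom hT E hE n) n (piHom_nIso hT E hE n) n (Nat.lt_succ_self n)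
    exact asIso a
  · have hX : ∀ m, Xseq T E m = (E.F.obj)^[m] (constG T) := by
      intro m
      induction m with
      | zero => rfl
      | succ m ih => rw [Function.iterate_succ_apply', ← ih]; rfl
    intro n
    show (Xseq T E (n + 1)).obj n = _
    exact congrArg (fun Z => GObj.obj Z n) (hX (n + 1))
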